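/- Let A = [[1,2],[3,0]] and G := {v ∈ ℚ² : Aⁿ v ∈ ℤ² for some n ∈ ℕ}, and let τ : G → (1/5)·ℤ[1/3] be the surjective additive homomorphism τ(v₁, v₂) = (3v₁ + 2v₂)/5, where (1/5)·ℤ[1/3] = {k/(5·3ⁿ) : k ∈ ℤ, n ∈ ℕ}. There is no additive group homomorphism r : (1/5)·ℤ[1/3] → G with τ(r(x)) = x for all x; that is, the short exact sequence 0 → ker τ → G → (1/5)·ℤ[1/3] → 0 does not split. -/

import Mathlib

lemma eig2 (n : ℕ) : ∀ v : Fin 2 → ℚ,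
    ((!![(1 : ℚ), 2; 3, 0]) ^ n).mulVec v 0 - ((!![(1 : ℚ), 2; 3, 0]) ^ n).mulVec v 1
      = (-2) ^ n * (v 0 - v 1) := by
  induction n with
  | zero => intro v; simp [Matrix.one_mulVec]
  | succ n ih =>
    intro v
    rw [pow_succ, ← Matrix.mulVec_mulVec, ih]
    simp [Matrix.mulVec, dotProduct, Fin.sum_univ_two, pow_succ]
    ring

lemma eig3 (n : ℕ) : ∀ v : Fin 2 → ℚ,
    3 * ((!![(1 : ℚ), 2; 3, 0]) ^ n).mulVec v 0 + 2 * ((!![(1 : ℚ), 2; 3, 0]) ^ n).mulVec v 1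
      = 3 ^ n * (3 * v 0 + 2 * v 1) := by
  induction n with
  | zero => intro v; simp [Matrix.one_mulVec]
  | succ n ih =>
    intro v
    rw [pow_succ, ← Matrix.mulVec_mulVec, ih]
    simp [Matrix.mulVec, dotProduct, Fin.sum_univ_two, pow_succ]
    ring

/-- Let `A = [[1,2],[3,0]]`, `G = {v ∈ ℚ² : Aⁿ v ∈ ℤ² for some n}`, and let
`τ : G → (1/5)·ℤ[1/3]`, `τ(v₁,v₂) = (3v₁ + 2v₂)/5` be the surjective frequency
homomorphism, where `(1/5)·ℤ[1/3] = {k/(5·3ⁿ)}`.  There is no additive homomorphism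
`r : (1/5)·ℤ[1/3] → G` with `τ(r(x)) = x` for all `x`; i.e. the short exact sequence
`0 → ker τ → G → (1/5)·ℤ[1/3] → 0` does not split. -/
theorem stmt14 (G : AddSubgroup (Fin 2 → ℚ)) (F : AddSubgroup ℚ)
    (hG : (G : Set (Fin 2 → ℚ)) =
      {v | ∃ n : ℕ, ∀ i, ∃ z : ℤ, ((!![(1 : ℚ), 2; 3, 0]) ^ n).mulVec v i = (z : ℚ)})
    (hF : (F : Set ℚ) = {q | ∃ (k : ℤ) (m : ℕ), q = (k : ℚ) / (5 * 3 ^ m)}) :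
    ¬ ∃ r : F →+ (Fin 2 → ℚ),
      (∀ x : F, r x ∈ G) ∧ ∀ x : F, (3 * r x 0 + 2 * r x 1) / 5 = (x : ℚ) := by
  rintro ⟨r, hrG, hrτ⟩
  -- elements x_m = 1/(5·3^m) of F
  have hxm : ∀ m : ℕ, (1 : ℚ) / (5 * 3 ^ m) ∈ F := by
    intro m
    have : (1 : ℚ) / (5 * 3 ^ m) ∈ (F : Set ℚ) := by
      rw [hF]; exact ⟨1, m, by push_cast; ring⟩
    exact this
  set x : ℕ → F := fun m => ⟨(1 : ℚ) / (5 * 3 ^ m), hxm m⟩ with hx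
  -- r is G-valued, so the second coordinate difference is in ℤ[1/2]
  have hG' : ∀ m : ℕ, ∃ (n : ℕ) (c : ℤ),
      (r (x m) 0 - r (x m) 1) * (-2) ^ n = (c : ℚ) := by
    intro m
    have hmem : r (x m) ∈ (G : Set (Fin 2 → ℚ)) := hrG (x m)
    rw [hG] at hmem
    obtain ⟨n, hn⟩ := hmem
    obtain ⟨z0, hz0⟩ := hn 0
    obtain ⟨z1, hz1⟩ := hn 1
    refine ⟨n, z0 - z1, ?_⟩
    have h2 := eig2 n (r (x m))
    rw [hz0, hz1] at h2
    push_cast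
    linarith [h2]
  -- 3^m • x m = x 0
  have hsm : ∀ m : ℕ, (3 ^ m : ℕ) • x m = x 0 := by
    intro m
    apply Subtype.ext
    push_cast [hx]
    field_simp
    ring
    rw [← mul_pow]; norm_num
  -- hence (r (x 0) 0 - r (x 0) 1) = 3^m * (r (x m) 0 - r (x m) 1)
  have hkey : ∀ m : ℕ, r (x 0) 0 - r (x 0) 1
      = (3 : ℚ) ^ m * (r (x m) 0 - r (x m) 1) := by
    intro m
    have := congrArg (fun v : Fin 2 → ℚ => v 0 - v 1) (congrArg r (hsm m)).symm
    simp only [map_nsmul, Pi.smul_apply, nsmul_eq_mul] at this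
    push_cast at this
    rw [this]; ring
  have hs0 : r (x 0) 0 - r (x 0) 1 = 0 := by
    by_contra hne
    obtain ⟨s, hsdef⟩ : ∃ s : ℚ, s = r (x 0) 0 - r (x 0) 1 := ⟨_, rfl⟩
    rw [← hsdef] at hne
    have hkey' : ∀ m : ℕ, s = (3 : ℚ) ^ m * (r (x m) 0 - r (x m) 1) := by
      intro m; rw [hsdef]; exact hkey m
    obtain ⟨m, hmdef⟩ : ∃ m : ℕ, m = s.num.natAbs := ⟨_, rfl⟩
    obtain ⟨n, c, hc⟩ := hG' m
    have heq : s * (-2) ^ n = 3 ^ m * (c : ℚ) := by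
      rw [hkey' m, mul_assoc, hc]
    have hdenne : (s.den : ℚ) ≠ 0 := Nat.cast_ne_zero.mpr s.den_nz
    have hden := Rat.num_div_den s
    rw [div_eq_iff hdenne] at hden
    have heqZ : s.num * (-2) ^ n = 3 ^ m * (c * s.den) := by
      have h : (s.num : ℚ) * (-2) ^ n = 3 ^ m * ((c : ℚ) * s.den) := by
        rw [hden]
        calc s * s.den * (-2) ^ n = s * (-2) ^ n * s.den := by ring
        _ = 3 ^ m * (c : ℚ) * s.den := by rw [heq]
        _ = 3 ^ m * ((c : ℚ) * s.den) := by ring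
      exact_mod_cast h
    have hdvd : (3 : ℤ) ^ m ∣ s.num * (-2) ^ n := ⟨c * s.den, heqZ⟩
    have hcop : IsCoprime ((3 : ℤ) ^ m) ((-2 : ℤ) ^ n) := by
      apply IsCoprime.pow
      rw [Int.isCoprime_iff_gcd_eq_one]
      decide
    have hdvd' : (3 : ℤ) ^ m ∣ s.num := hcop.dvd_of_dvd_mul_right hdvd
    have hdvdN : 3 ^ m ∣ s.num.natAbs := by
      have h := Int.natAbs_dvd_natAbs.mpr hdvd'
      simp only [Int.natAbs_pow, Int.natAbs_natCast] at h
      exact h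
    have hnum : s.num ≠ 0 := Rat.num_ne_zero.mpr hne
    have hle : 3 ^ m ≤ s.num.natAbs :=
      Nat.le_of_dvd (Int.natAbs_pos.mpr hnum) hdvdN
    have hlt : m < 3 ^ m := Nat.lt_pow_self (by norm_num)
    omega
  -- so r (x 0) 0 = r (x 0) 1 = 1/5
  have heq01 : r (x 0) 0 = r (x 0) 1 := by linarith
  have hτ0 := hrτ (x 0)
  have hx0 : ((x 0 : F) : ℚ) = 1 / 5 := by simp [hx]
  rw [hx0] at hτ0
  have hval : r (x 0) 0 = 1 / 5 := by
    rw [← heq01] at hτ0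
    field_simp at hτ0 ⊢
    linarith
  -- but then A^n (r (x 0)) has coordinates z with 5z = 3^n, impossible
  have hmem : r (x 0) ∈ (G : Set (Fin 2 → ℚ)) := hrG (x 0)
  rw [hG] at hmem
  obtain ⟨n, hn⟩ := hmem
  obtain ⟨z0, hz0⟩ := hn 0
  obtain ⟨z1, hz1⟩ := hn 1
  have h2 := eig2 n (r (x 0))
  have h3 := eig3 n (r (x 0))
  rw [hz0, hz1] at h2 h3
  rw [← heq01, hval] at h2 h3
  have hz01 : z0 = z1 := by
    have : (z0 : ℚ) = z1 := by
      have : (z0 : ℚ) - z1 = 0 := by rw [h2]; ring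
      linarith
    exact_mod_cast this
  have h5 : (5 : ℤ) * z0 = 3 ^ n := by
    have : (5 : ℚ) * z0 = 3 ^ n := by
      rw [hz01] at h3 ⊢

      field_simp at h3
      linarith
    exact_mod_cast this
  have hdvd5 : (5 : ℤ) ∣ 3 ^ n := ⟨z0, h5.symm⟩
  have := (by norm_num : Prime (5:ℤ)).dvd_of_dvd_pow hdvd5
  norm_num at this
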